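/- An orthogonal polygon without holes that has at most k knobs and no non-knob convex vertex has at most 4k − 4 vertices. -/
import Mathlib


/-- An orthogonal polygon without holes with vertices `0, 1, …, n-1` in cyclic order,
where `conv i` records whether vertex `i` is convex.  The edge `(i, i+1)` is a knob
iff both endpoints are convex.  In an orthogonal polygon without holes the number of
concave vertices is the number of convex vertices minus 4 (`hcount`).  If there are
at most `k` knobs and there is no non-knob convex vertex (every convex vertex is an
endpoint of a knob, `hnonknob`), then the polygon has at most `4k - 4` vertices. -/
theorem vertices_le_of_no_nonknob (n k : ℕ) [NeZero n] (conv : Fin n → Bool)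
    (hcount : (Finset.univ.filter fun i => conv i = false).card + 4 =
      (Finset.univ.filter fun i => conv i = true).card)
    (hknobs : (Finset.univ.filter fun i => conv i = true ∧ conv (i + 1) = true).card ≤ k)
    (hnonknob : ∀ i, conv i = true → conv (i + 1) = true ∨ conv (i - 1) = true) :
    n ≤ 4 * k - 4 := by
  classical
  set S := Finset.univ.filter fun i : Fin n => conv i = true with hS
  set T := Finset.univ.filter fun i : Fin n => conv i = true ∧ conv (i + 1) = true with hT
  have key : S.card ≤ 2 * T.card := by
    apply Finset.card_le_mul_card_image_of_maps_to
      (f := fun i => if conv (i + 1) = true then i else i - 1)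
    · intro i hi
      simp only [hS, Finset.mem_filter, Finset.mem_univ, true_and] at hi
      simp only [hT, Finset.mem_filter, Finset.mem_univ, true_and]
      rcases hnonknob i hi with h | h
      · simp [h, hi]
      · by_cases h2 : conv (i + 1) = true
        · simp [h2, hi]
        · simp [h2, h, sub_add_cancel, hi]
    · intro b _
      have : (S.filter fun i => (if conv (i + 1) = true then i else i - 1) = b) ⊆ {b, b + 1} := by
        intro i hi
        simp only [Finset.mem_filter] at hi
        rcases hi with ⟨_, hi⟩
        split at hi
        · simp [hi]
        · have : i = b + 1 := by rw [← hi]; abel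
          simp [this]
      calc (S.filter fun i => (if conv (i + 1) = true then i else i - 1) = b).card
          ≤ ({b, b + 1} : Finset (Fin n)).card := Finset.card_le_card this
        _ ≤ 2 := Finset.card_insert_le _ _ |>.trans (by simp)
  have hsum : (Finset.univ.filter fun i : Fin n => conv i = false).card + S.card = n := by
    have := Finset.card_filter_add_card_filter_not
      (s := (Finset.univ : Finset (Fin n))) (p := fun i => conv i = true)
    simp only [Finset.card_univ, Fintype.card_fin] at this
    have h2 : (Finset.univ.filter fun i : Fin n => conv i = false).card =
        (Finset.univ.filter fun a : Fin n => ¬conv a = true).card := by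
      congr 1
      apply Finset.filter_congr
      intro i _
      simp
    rw [hS]
    omega
  have hT' : T.card ≤ k := hknobs
  omega
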